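/- The translation f mapping connexive formulas into positive intuitionistic formulas preserves and reflects provability: a sequent Γ ⇒ γ is provable in sC if and only if the translated sequent f(Γ) ⇒ f(γ) is provable in LJ⁺ (the positive fragment of Gentzen's LJ). -/
import Mathlib


inductive Fm : Type
  | var : ℕ → Fm
  | conj : Fm → Fm → Fm
  | disj : Fm → Fm → Fm
  | impl : Fm → Fm → Fm
  | neg : Fm → Fm
  deriving DecidableEq

open Fm

/-- Optional rules: cut, (ex-middle), (Peirce), (g-ex-middle), (at-ex-middle). -/
structure Rules where
  cut : Bool := false
  exMid : Bool := false
  peirce : Bool := false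
  gem : Bool := false
  atEx : Bool := false

/-- The sequent calculus sC for Wansing's connexive logic C, with optional extra rules. -/
inductive SC (R : Rules) : Finset Fm → Fm → Prop
  | init1 (p : ℕ) (Γ : Finset Fm) : SC R (insert (var p) Γ) (var p)
  | init2 (p : ℕ) (Γ : Finset Fm) : SC R (insert (neg (var p)) Γ) (neg (var p))
  | cut {Γ Δ : Finset Fm} {a c : Fm} : R.cut = true →
      SC R Γ a → SC R (insert a Δ) c → SC R (Γ ∪ Δ) c
  | implL {Γ Δ : Finset Fm} {a b c : Fm} :
      SC R Γ a → SC R (insert b Δ) c → SC R (insert (impl a b) (Γ ∪ Δ)) c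
  | implR {Γ : Finset Fm} {a b : Fm} :
      SC R (insert a Γ) b → SC R Γ (impl a b)
  | conjL {Γ : Finset Fm} {a b c : Fm} :
      SC R (insert a (insert b Γ)) c → SC R (insert (conj a b) Γ) c
  | conjR {Γ : Finset Fm} {a b : Fm} :
      SC R Γ a → SC R Γ b → SC R Γ (conj a b)
  | disjL {Γ : Finset Fm} {a b c : Fm} :
      SC R (insert a Γ) c → SC R (insert b Γ) c → SC R (insert (disj a b) Γ) c
  | disjR1 {Γ : Finset Fm} {a b : Fm} : SC R Γ a → SC R Γ (disj a b)
  | disjR2 {Γ : Finset Fm} {a b : Fm} : SC R Γ b → SC R Γ (disj a b)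
  | negnegL {Γ : Finset Fm} {a c : Fm} :
      SC R (insert a Γ) c → SC R (insert (neg (neg a)) Γ) c
  | negnegR {Γ : Finset Fm} {a : Fm} : SC R Γ a → SC R Γ (neg (neg a))
  | negimplL {Γ Δ : Finset Fm} {a b c : Fm} :
      SC R Γ a → SC R (insert (neg b) Δ) c → SC R (insert (neg (impl a b)) (Γ ∪ Δ)) c
  | negimplR {Γ : Finset Fm} {a b : Fm} :
      SC R (insert a Γ) (neg b) → SC R Γ (neg (impl a b))
  | negconjL {Γ : Finset Fm} {a b c : Fm} :
      SC R (insert (neg a) Γ) c → SC R (insert (neg b) Γ) c →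
      SC R (insert (neg (conj a b)) Γ) c
  | negconjR1 {Γ : Finset Fm} {a b : Fm} : SC R Γ (neg a) → SC R Γ (neg (conj a b))
  | negconjR2 {Γ : Finset Fm} {a b : Fm} : SC R Γ (neg b) → SC R Γ (neg (conj a b))
  | negdisjL {Γ : Finset Fm} {a b c : Fm} :
      SC R (insert (neg a) (insert (neg b) Γ)) c → SC R (insert (neg (disj a b)) Γ) c
  | negdisjR {Γ : Finset Fm} {a b : Fm} :
      SC R Γ (neg a) → SC R Γ (neg b) → SC R Γ (neg (disj a b))
  | exMid {Γ : Finset Fm} {a c : Fm} : R.exMid = true →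
      SC R (insert (neg a) Γ) c → SC R (insert a Γ) c → SC R Γ c
  | peirce {Γ : Finset Fm} {a b : Fm} : R.peirce = true →
      SC R (insert (impl a b) Γ) a → SC R Γ a
  | gem {Γ : Finset Fm} {a b c : Fm} : R.gem = true →
      SC R (insert (impl a b) Γ) c → SC R (insert a Γ) c → SC R Γ c
  | atEx {Γ : Finset Fm} {p : ℕ} {c : Fm} : R.atEx = true →
      SC R (insert (neg (var p)) Γ) c → SC R (insert (var p) Γ) c → SC R Γ c

/-- sC (with cut). -/
def sC : Rules := { cut := true }
/-- cut-free sC. -/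
def sCcf : Rules := {}
/-- sC3 = sC + (ex-middle). -/
def sC3 : Rules := { cut := true, exMid := true }
/-- sMC = sC + (Peirce). -/
def sMC : Rules := { cut := true, peirce := true }
/-- sMC* = sC + (g-ex-middle). -/
def sMCstar : Rules := { cut := true, gem := true }

/-- Positive intuitionistic formulas over Φ ∪ Φ' (pos p = p ∈ Φ, ppos p = p' ∈ Φ'). -/
inductive PFm : Type
  | pos : ℕ → PFm
  | ppos : ℕ → PFm
  | conj : PFm → PFm → PFm
  | disj : PFm → PFm → PFm
  | impl : PFm → PFm → PFm
  deriving DecidableEq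

mutual
/-- The translation f from the connexive language into the positive language. -/
def fpos : Fm → PFm
  | .var p => .pos p
  | .conj a b => .conj (fpos a) (fpos b)
  | .disj a b => .disj (fpos a) (fpos b)
  | .impl a b => .impl (fpos a) (fpos b)
  | .neg a => fneg a
/-- f(∼α). -/
def fneg : Fm → PFm
  | .var p => .ppos p
  | .conj a b => .disj (fneg a) (fneg b)
  | .disj a b => .conj (fneg a) (fneg b)
  | .impl a b => .impl (fpos a) (fneg b)
  | .neg a => fpos a
end

/-- Optional rules for the positive calculus. -/
structure PRules where
  cut : Bool := false
  peirce : Bool := false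

/-- LJ⁺: single-succedent positive intuitionistic sequent calculus, optional cut/Peirce. -/
inductive LJ (R : PRules) : Finset PFm → PFm → Prop
  | init1 (p : ℕ) (Γ : Finset PFm) : LJ R (insert (.pos p) Γ) (.pos p)
  | init2 (p : ℕ) (Γ : Finset PFm) : LJ R (insert (.ppos p) Γ) (.ppos p)
  | cut {Γ Δ : Finset PFm} {a c : PFm} : R.cut = true →
      LJ R Γ a → LJ R (insert a Δ) c → LJ R (Γ ∪ Δ) c
  | implL {Γ Δ : Finset PFm} {a b c : PFm} :
      LJ R Γ a → LJ R (insert b Δ) c → LJ R (insert (.impl a b) (Γ ∪ Δ)) c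
  | implR {Γ : Finset PFm} {a b : PFm} :
      LJ R (insert a Γ) b → LJ R Γ (.impl a b)
  | conjL {Γ : Finset PFm} {a b c : PFm} :
      LJ R (insert a (insert b Γ)) c → LJ R (insert (.conj a b) Γ) c
  | conjR {Γ : Finset PFm} {a b : PFm} :
      LJ R Γ a → LJ R Γ b → LJ R Γ (.conj a b)
  | disjL {Γ : Finset PFm} {a b c : PFm} :
      LJ R (insert a Γ) c → LJ R (insert b Γ) c → LJ R (insert (.disj a b) Γ) c
  | disjR1 {Γ : Finset PFm} {a b : PFm} : LJ R Γ a → LJ R Γ (.disj a b)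
  | disjR2 {Γ : Finset PFm} {a b : PFm} : LJ R Γ b → LJ R Γ (.disj a b)
  | peirce {Γ : Finset PFm} {a b : PFm} : R.peirce = true →
      LJ R (insert (.impl a b) Γ) a → LJ R Γ a

/-- Back-translation g from the positive language into the connexive language. -/
def g : PFm → Fm
  | .pos p => .var p
  | .ppos p => .neg (.var p)
  | .conj a b => .conj (g a) (g b)
  | .disj a b => .disj (g a) (g b)
  | .impl a b => .impl (g a) (g b)

/-- Forward direction: translation preserves provability. -/
theorem fwd {Γ : Finset Fm} {γ : Fm} (h : SC sC Γ γ) :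
    LJ { cut := true } (Γ.image fpos) (fpos γ) := by
  induction h with
  | init1 p Γ => simp only [Finset.image_insert, fpos]; exact LJ.init1 p _
  | init2 p Γ => simp only [Finset.image_insert, fpos, fneg]; exact LJ.init2 p _
  | cut hr _ _ ih1 ih2 =>
      simp only [Finset.image_union, Finset.image_insert] at *
      exact LJ.cut rfl ih1 ih2
  | implL _ _ ih1 ih2 =>
      simp only [Finset.image_union, Finset.image_insert, fpos] at *
      exact LJ.implL ih1 ih2
  | implR _ ih =>
      simp only [Finset.image_insert, fpos] at *
      exact LJ.implR ih
  | conjL _ ih =>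
      simp only [Finset.image_insert, fpos] at *
      exact LJ.conjL ih
  | conjR _ _ ih1 ih2 =>
      simp only [fpos] at *
      exact LJ.conjR ih1 ih2
  | disjL _ _ ih1 ih2 =>
      simp only [Finset.image_insert, fpos] at *
      exact LJ.disjL ih1 ih2
  | disjR1 _ ih => simp only [fpos] at *; exact LJ.disjR1 ih
  | disjR2 _ ih => simp only [fpos] at *; exact LJ.disjR2 ih
  | negnegL _ ih =>
      simp only [Finset.image_insert, fpos, fneg] at *
      exact ih
  | negnegR _ ih => simp only [fpos, fneg] at *; exact ih
  | negimplL _ _ ih1 ih2 =>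
      simp only [Finset.image_union, Finset.image_insert, fpos, fneg] at *
      exact LJ.implL ih1 ih2
  | negimplR _ ih =>
      simp only [Finset.image_insert, fpos, fneg] at *
      exact LJ.implR ih
  | negconjL _ _ ih1 ih2 =>
      simp only [Finset.image_insert, fpos, fneg] at *
      exact LJ.disjL ih1 ih2
  | negconjR1 _ ih => simp only [fpos, fneg] at *; exact LJ.disjR1 ih
  | negconjR2 _ ih => simp only [fpos, fneg] at *; exact LJ.disjR2 ih
  | negdisjL _ ih =>
      simp only [Finset.image_insert, fpos, fneg] at *
      exact LJ.conjL ih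
  | negdisjR _ _ ih1 ih2 => simp only [fpos, fneg] at *; exact LJ.conjR ih1 ih2
  | exMid hr => simp [sC] at hr
  | peirce hr => simp [sC] at hr
  | gem hr => simp [sC] at hr
  | atEx hr => simp [sC] at hr

/-- Back-translation: g maps LJ⁺-derivations to sC-derivations. -/
theorem backtr {Δ : Finset PFm} {δ : PFm} (h : LJ { cut := true } Δ δ) :
    SC sC (Δ.image g) (g δ) := by
  induction h with
  | init1 p Γ => simp only [Finset.image_insert, g]; exact SC.init1 p _
  | init2 p Γ => simp only [Finset.image_insert, g]; exact SC.init2 p _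
  | cut hr _ _ ih1 ih2 =>
      simp only [Finset.image_union, Finset.image_insert] at *
      exact SC.cut rfl ih1 ih2
  | implL _ _ ih1 ih2 =>
      simp only [Finset.image_union, Finset.image_insert, g] at *
      exact SC.implL ih1 ih2
  | implR _ ih =>
      simp only [Finset.image_insert, g] at *
      exact SC.implR ih
  | conjL _ ih =>
      simp only [Finset.image_insert, g] at *
      exact SC.conjL ih
  | conjR _ _ ih1 ih2 => simp only [g] at *; exact SC.conjR ih1 ih2
  | disjL _ _ ih1 ih2 =>
      simp only [Finset.image_insert, g] at *
      exact SC.disjL ih1 ih2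
  | disjR1 _ ih => simp only [g] at *; exact SC.disjR1 ih
  | disjR2 _ ih => simp only [g] at *; exact SC.disjR2 ih
  | peirce hr => simp at hr

/-- Key interprovability lemma: every formula is sC-equivalent to its round-trip
    normal form, and likewise for its negation. -/
theorem keylem (α : Fm) :
    (∀ Γ, SC sC (insert α Γ) (g (fpos α))) ∧
    (∀ Γ, SC sC (insert (g (fpos α)) Γ) α) ∧
    (∀ Γ, SC sC (insert (.neg α) Γ) (g (fneg α))) ∧
    (∀ Γ, SC sC (insert (g (fneg α)) Γ) (.neg α)) := by
  induction α with
  | var p =>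
      refine ⟨fun Γ => ?_, fun Γ => ?_, fun Γ => ?_, fun Γ => ?_⟩ <;>
        simp only [fpos, fneg, g]
      · exact SC.init1 p Γ
      · exact SC.init1 p Γ
      · exact SC.init2 p Γ
      · exact SC.init2 p Γ
  | conj a b iha ihb =>
      obtain ⟨a1, a2, a3, a4⟩ := iha
      obtain ⟨b1, b2, b3, b4⟩ := ihb
      refine ⟨fun Γ => ?_, fun Γ => ?_, fun Γ => ?_, fun Γ => ?_⟩ <;>
        simp only [fpos, fneg, g]
      · exact SC.conjL (SC.conjR (a1 _) (by rw [Finset.insert_comm]; exact b1 _))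
      · exact SC.conjL (SC.conjR (a2 _) (by rw [Finset.insert_comm]; exact b2 _))
      · exact SC.negconjL (SC.disjR1 (a3 _)) (SC.disjR2 (b3 _))
      · exact SC.disjL (SC.negconjR1 (a4 _)) (SC.negconjR2 (b4 _))
  | disj a b iha ihb =>
      obtain ⟨a1, a2, a3, a4⟩ := iha
      obtain ⟨b1, b2, b3, b4⟩ := ihb
      refine ⟨fun Γ => ?_, fun Γ => ?_, fun Γ => ?_, fun Γ => ?_⟩ <;>
        simp only [fpos, fneg, g]
      · exact SC.disjL (SC.disjR1 (a1 _)) (SC.disjR2 (b1 _))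
      · exact SC.disjL (SC.disjR1 (a2 _)) (SC.disjR2 (b2 _))
      · exact SC.negdisjL (SC.conjR (a3 _) (by rw [Finset.insert_comm]; exact b3 _))
      · exact SC.conjL (SC.negdisjR (a4 _) (by rw [Finset.insert_comm]; exact b4 _))
  | impl a b iha ihb =>
      obtain ⟨a1, a2, a3, a4⟩ := iha
      obtain ⟨b1, b2, b3, b4⟩ := ihb
      refine ⟨fun Γ => ?_, fun Γ => ?_, fun Γ => ?_, fun Γ => ?_⟩ <;>
        simp only [fpos, fneg, g]
      · -- insert (impl a b) Γ ⇒ impl (g (fpos a)) (g (fpos b))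
        apply SC.implR
        rw [Finset.insert_comm]
        have := SC.implL (a := a) (b := b) (c := g (fpos b))
          (Γ := insert (g (fpos a)) Γ) (Δ := insert (g (fpos a)) Γ)
          (a2 _) (b1 _)
        rwa [Finset.union_self] at this
      · apply SC.implR
        rw [Finset.insert_comm]
        have := SC.implL (a := g (fpos a)) (b := g (fpos b)) (c := b)
          (Γ := insert a Γ) (Δ := insert a Γ) (a1 _) (b2 _)
        rwa [Finset.union_self] at this
      · apply SC.implR
        rw [Finset.insert_comm]
        have := SC.negimplL (a := a) (b := b) (c := g (fneg b))
          (Γ := insert (g (fpos a)) Γ) (Δ := insert (g (fpos a)) Γ)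
          (a2 _) (b3 _)
        rwa [Finset.union_self] at this
      · apply SC.negimplR
        rw [Finset.insert_comm]
        have := SC.implL (a := g (fpos a)) (b := g (fneg b)) (c := Fm.neg b)
          (Γ := insert a Γ) (Δ := insert a Γ) (a1 _) (b4 _)
        rwa [Finset.union_self] at this
  | neg a iha =>
      obtain ⟨a1, a2, a3, a4⟩ := iha
      refine ⟨fun Γ => ?_, fun Γ => ?_, fun Γ => ?_, fun Γ => ?_⟩ <;>
        simp only [fpos, fneg, g]
      · exact a3 _
      · exact a4 _
      · exact SC.negnegL (a1 _)
      · exact SC.negnegR (a2 _)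

/-- Replace each round-trip normal form in the context by the original formula. -/
theorem ctxrepl (Γ : Finset Fm) : ∀ (Δ : Finset Fm) (c : Fm),
    SC sC (Γ.image (fun α => g (fpos α)) ∪ Δ) c → SC sC (Γ ∪ Δ) c := by
  classical
  induction Γ using Finset.induction_on with
  | empty => intro Δ c h; simpa using h
  | @insert a Γ _ ih =>
      intro Δ c h
      simp only [Finset.image_insert, Finset.insert_union] at h
      have h1 : SC sC ({a} ∪ (Γ.image (fun α => g (fpos α)) ∪ Δ)) c :=
        SC.cut rfl (by simpa using (keylem a).1 ∅) h
      rw [show ({a} : Finset Fm) ∪ (Finset.image (fun α => g (fpos α)) Γ ∪ Δ) =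
          Finset.image (fun α => g (fpos α)) Γ ∪ insert a Δ from by ext x; simp; try tauto] at h1
      have h2 := ih (insert a Δ) c h1
      rwa [show Γ ∪ insert a Δ = insert a Γ ∪ Δ from by ext x; simp; try tauto] at h2

/-- the translation f preserves and reflects provability between sC and LJ⁺. -/
theorem stmt6 (Γ : Finset Fm) (γ : Fm) :
    SC sC Γ γ ↔ LJ { cut := true } (Γ.image fpos) (fpos γ) := by
  constructor
  · exact fwd
  · intro h
    have h1 := backtr h
    rw [Finset.image_image] at h1
    have h2 : SC sC (Γ.image (fun α => g (fpos α)) ∪ Γ) γ :=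
      SC.cut rfl h1 (by simpa using (keylem γ).2.1 Γ)
    have h3 := ctxrepl Γ Γ γ h2
    rwa [Finset.union_self] at h3
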